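/- In the real normed linear space (ℝ⁴, ‖·‖_∞), the set S = { (1,1,1,1), (1,1,-1,-1), (1,-1,-1,1), (1,-1,1,-1) } is a strongly orthonormal Hamel basis in the sense of Birkhoff-James, but the zero vector θ is NOT the best coapproximation to (1,-1,-1,1) out of span{ (1,1,1,1), (1,1,-1,-1), (1,-1,1,-1) }; that is, there exists g ∈ span{ (1,1,1,1), (1,1,-1,-1), (1,-1,1,-1) } with ‖g‖_∞ > ‖(1,-1,-1,1) - g‖_∞. -/

import Mathlib

/-- `x` together with the family is strongly orthonormal *relative to* the element `x i₀`
in the sense of Birkhoff-James: all members are unit vectors and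
`‖x i₀‖ < ‖x i₀ + ∑_{j ≠ i₀} c j • x j‖` whenever not all the `c j` (`j ≠ i₀`) vanish. -/
def StronglyOrthRel {X : Type*} [NormedAddCommGroup X] [NormedSpace ℝ X]
    {n : ℕ} (x : Fin n → X) (i₀ : Fin n) : Prop :=
  (∀ i, ‖x i‖ = 1) ∧
    ∀ c : Fin n → ℝ, (∃ j, j ≠ i₀ ∧ c j ≠ 0) →
      ‖x i₀‖ < ‖x i₀ + ∑ j ∈ Finset.univ.erase i₀, c j • x j‖

/-- A finite family of unit vectors that is strongly orthonormal in the sense of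
Birkhoff-James. -/
def StronglyOrthSet {X : Type*} [NormedAddCommGroup X] [NormedSpace ℝ X]
    {n : ℕ} (x : Fin n → X) : Prop :=
  ∀ i, StronglyOrthRel x i


/-- The vector `(a, b, c, d)` viewed as an element of `(ℝ⁴, ‖·‖_∞)`. -/
def vec4 (a b c d : ℝ) : PiLp ⊤ (fun _ : Fin 4 => ℝ) :=
  (WithLp.equiv ⊤ (Fin 4 → ℝ)).symm ![a, b, c, d]

lemma coord_le (v : PiLp ⊤ (fun _ : Fin 4 => ℝ)) (k : Fin 4) : |v k| ≤ ‖v‖ := by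
  rw [PiLp.norm_eq_ciSup]
  exact le_ciSup (f := fun i => ‖v i‖) (Set.Finite.bddAbove (Set.finite_range _)) k

lemma norm_le4 (v : PiLp ⊤ (fun _ : Fin 4 => ℝ)) (M : ℝ) (h : ∀ k, |v k| ≤ M) : ‖v‖ ≤ M := by
  rw [PiLp.norm_eq_ciSup]
  exact ciSup_le fun i => h i

lemma norm_eq4 (v : PiLp ⊤ (fun _ : Fin 4 => ℝ)) (M : ℝ)
    (h : ∀ k, |v k| ≤ M) (h2 : ∃ k, |v k| = M) : ‖v‖ = M := by
  obtain ⟨k, hk⟩ := h2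
  exact le_antisymm (norm_le4 v M h) (hk ▸ coord_le v k)

lemma norm_pm (a b c d : ℝ) (ha : |a| = 1) (hb : |b| = 1) (hc : |c| = 1) (hd : |d| = 1) :
    ‖vec4 a b c d‖ = 1 := by
  refine norm_eq4 _ 1 (fun k => ?_) ⟨0, by simpa [vec4] using ha⟩
  fin_cases k <;> simp [vec4, ha, hb, hc, hd]

theorem stmt_14 :
    (LinearIndependent ℝ
        ![vec4 1 1 1 1, vec4 1 1 (-1) (-1), vec4 1 (-1) (-1) 1, vec4 1 (-1) 1 (-1)] ∧
      Submodule.span ℝ (Set.range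
        ![vec4 1 1 1 1, vec4 1 1 (-1) (-1), vec4 1 (-1) (-1) 1, vec4 1 (-1) 1 (-1)]) = ⊤ ∧
      StronglyOrthSet
        ![vec4 1 1 1 1, vec4 1 1 (-1) (-1), vec4 1 (-1) (-1) 1, vec4 1 (-1) 1 (-1)]) ∧
    ∃ g ∈ Submodule.span ℝ
        ({vec4 1 1 1 1, vec4 1 1 (-1) (-1), vec4 1 (-1) 1 (-1)} :
          Set (PiLp ⊤ (fun _ : Fin 4 => ℝ))),
      ‖vec4 1 (-1) (-1) 1 - g‖ < ‖g‖ := by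
  have hunit : ∀ i, ‖(![vec4 1 1 1 1, vec4 1 1 (-1) (-1), vec4 1 (-1) (-1) 1,
      vec4 1 (-1) 1 (-1)] : Fin 4 → _) i‖ = 1 := by
    intro i
    fin_cases i <;> · show ‖vec4 _ _ _ _‖ = 1; apply norm_pm <;> norm_num
  refine ⟨⟨?_, ?_, ?_⟩, ?_⟩
  · -- linear independence
    rw [Fintype.linearIndependent_iff]
    intro g hg
    rw [Fin.sum_univ_four] at hg
    have h0 := congrArg (fun v => v 0) hg
    have h1 := congrArg (fun v => v 1) hg
    have h2 := congrArg (fun v => v 2) hg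
    have h3 := congrArg (fun v => v 3) hg
    simp [vec4] at h0 h1 h2 h3
    intro i
    fin_cases i
    · show g 0 = 0; linarith
    · show g 1 = 0; linarith
    · show g 2 = 0; linarith
    · show g 3 = 0; linarith
  · -- span = ⊤
    rw [eq_top_iff]
    rintro x -
    have hx : x = ((x 0 + x 1 + x 2 + x 3)/4) • vec4 1 1 1 1
        + ((x 0 + x 1 - x 2 - x 3)/4) • vec4 1 1 (-1) (-1)
        + ((x 0 - x 1 - x 2 + x 3)/4) • vec4 1 (-1) (-1) 1
        + ((x 0 - x 1 + x 2 - x 3)/4) • vec4 1 (-1) 1 (-1) := by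
      ext k
      fin_cases k <;> · simp [vec4]; ring
    rw [hx]
    refine Submodule.add_mem _ (Submodule.add_mem _ (Submodule.add_mem _ ?_ ?_) ?_) ?_ <;>
      exact Submodule.smul_mem _ _ (Submodule.subset_span (by
        simp [Set.range, Matrix.cons_val_zero]
        first
        | exact ⟨0, rfl⟩ | exact ⟨1, rfl⟩ | exact ⟨2, rfl⟩ | exact ⟨3, rfl⟩))
  · -- strongly orthonormal
    intro i
    refine ⟨hunit, ?_⟩
    intro c hc
    obtain ⟨j, hj, hcj⟩ := hc
    rw [hunit i]
    by_contra hcon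
    push_neg at hcon
    rw [Finset.sum_erase_eq_sub (Finset.mem_univ _), Fin.sum_univ_four] at hcon
    fin_cases i <;>
    · have h0 := le_trans (coord_le _ 0) hcon
      have h1 := le_trans (coord_le _ 1) hcon
      have h2 := le_trans (coord_le _ 2) hcon
      have h3 := le_trans (coord_le _ 3) hcon
      simp [vec4, abs_le] at h0 h1 h2 h3
      obtain ⟨h0a, h0b⟩ := h0
      obtain ⟨h1a, h1b⟩ := h1
      obtain ⟨h2a, h2b⟩ := h2
      obtain ⟨h3a, h3b⟩ := h3
      apply hcj
      fin_cases j <;>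
        first
        | exact absurd rfl hj
        | (show c 0 = 0; linarith)
        | (show c 1 = 0; linarith)
        | (show c 2 = 0; linarith)
        | (show c 3 = 0; linarith)
  · -- best coapproximation fails
    refine ⟨vec4 3 1 1 (-1), ?_, ?_⟩
    · have hg : vec4 3 1 1 (-1) = vec4 1 1 1 1 + vec4 1 1 (-1) (-1) + vec4 1 (-1) 1 (-1) := by
        ext k
        fin_cases k <;> · simp [vec4]; try norm_num
      rw [hg]
      refine Submodule.add_mem _ (Submodule.add_mem _ ?_ ?_) ?_ <;>
        exact Submodule.subset_span (by simp)
    · have h1 : ‖vec4 1 (-1) (-1) 1 - vec4 3 1 1 (-1)‖ = 2 := by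
        have : vec4 1 (-1) (-1) 1 - vec4 3 1 1 (-1) = vec4 (-2) (-2) (-2) 2 := by
          ext k
          fin_cases k <;> · simp [vec4]; norm_num
        rw [this]
        refine norm_eq4 _ 2 (fun k => ?_) ⟨0, by simp [vec4]⟩
        fin_cases k <;> simp [vec4]
      have h2 : ‖vec4 3 1 1 (-1)‖ = 3 := by
        refine norm_eq4 _ 3 (fun k => ?_) ⟨0, by simp [vec4]⟩
        fin_cases k <;> · simp [vec4]; try norm_num
      rw [h1, h2]
      norm_num
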